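/- arXiv:1401.0020 — 5 statements merged into one kernel-verified Lean document; each statement's English description precedes it below -/
import Mathlib

section
/- Policy improvement identity: let V be continuously differentiable on R^n, and let u_j, u_{j-1} : R^n → R^m with u_j = -(1/2)R⁻¹gᵀ∇V. Then L(V, u_j)(x) = L(V, u_{j-1})(x) + (u_j(x) - u_{j-1}(x))ᵀR(u_j(x) - u_{j-1}(x)) for all x, where L(V,u) = -∇Vᵀ(f+gu) - q - uᵀRu. Consequently, if L(V, u_{j-1}) ≥ 0 pointwise, then L(V, u_j) ≥ 0 pointwise. -/
open Matrix

/-- The gradient of `V : ℝⁿ → ℝ` at `y`, as a vector. -/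
noncomputable def grad {n : ℕ} (V : (Fin n → ℝ) → ℝ) (y : Fin n → ℝ) : Fin n → ℝ :=
  fun i => fderiv ℝ V y (Pi.single i 1)

/-- Policy improvement identity: with `u_j = -(1/2)R⁻¹gᵀ∇V`,
`L(V,u_j) = L(V,u_{j-1}) + |u_j - u_{j-1}|²_R` pointwise; hence
`L(V,u_{j-1}) ≥ 0` pointwise implies `L(V,u_j) ≥ 0` pointwise. -/
theorem policy_improvement_identity {n m : ℕ}
    (V : (Fin n → ℝ) → ℝ) (hV : ContDiff ℝ 1 V)
    (f : (Fin n → ℝ) → (Fin n → ℝ))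
    (g : (Fin n → ℝ) → Matrix (Fin n) (Fin m) ℝ)
    (R : Matrix (Fin m) (Fin m) ℝ)
    (hRsymm : R.IsSymm) (hRpd : R.PosDef)
    (q : (Fin n → ℝ) → ℝ) (hq : q 0 = 0 ∧ ∀ y ≠ 0, 0 < q y)
    -- L(V,u)(x)
    (L : ((Fin n → ℝ) → (Fin m → ℝ)) → (Fin n → ℝ) → ℝ)
    (hL : ∀ u y, L u y = -(grad V y ⬝ᵥ (f y + (g y) *ᵥ u y)) - q y - u y ⬝ᵥ (R *ᵥ u y))
    (uj ujm1 : (Fin n → ℝ) → (Fin m → ℝ))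
    (huj : ∀ y, uj y = (-(1/2) : ℝ) • (R⁻¹ *ᵥ ((g y)ᵀ *ᵥ grad V y))) :
    (∀ x : Fin n → ℝ,
      L uj x = L ujm1 x + (uj x - ujm1 x) ⬝ᵥ (R *ᵥ (uj x - ujm1 x))) ∧
    ((∀ x : Fin n → ℝ, 0 ≤ L ujm1 x) → (∀ x : Fin n → ℝ, 0 ≤ L uj x)) := by
  have key : ∀ x : Fin n → ℝ,
      L uj x = L ujm1 x + (uj x - ujm1 x) ⬝ᵥ (R *ᵥ (uj x - ujm1 x)) := by
    intro x
    have hdet : IsUnit R.det := isUnit_iff_ne_zero.mpr hRpd.det_pos.ne'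
    set a := uj x with ha
    set b := ujm1 x with hb
    have hRa : R *ᵥ a = (-(1/2) : ℝ) • ((g x)ᵀ *ᵥ grad V x) := by
      rw [ha, huj x, Matrix.mulVec_smul, Matrix.mulVec_mulVec,
        Matrix.mul_nonsing_inv _ hdet, Matrix.one_mulVec]
    have hw : (g x)ᵀ *ᵥ grad V x = (-2 : ℝ) • (R *ᵥ a) := by
      rw [hRa]; rw [smul_smul]; norm_num
    -- symmetry of the bilinear form
    have hsymm : ∀ v w : Fin m → ℝ, v ⬝ᵥ (R *ᵥ w) = w ⬝ᵥ (R *ᵥ v) := by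
      intro v w
      rw [Matrix.dotProduct_mulVec, ← Matrix.mulVec_transpose, hRsymm.eq,
        dotProduct_comm]
    -- ∇V ⬝ (g u) = (gᵀ ∇V) ⬝ u
    have hdot : ∀ u : Fin m → ℝ, grad V x ⬝ᵥ (g x *ᵥ u) = ((g x)ᵀ *ᵥ grad V x) ⬝ᵥ u := by
      intro u
      rw [Matrix.dotProduct_mulVec, ← Matrix.mulVec_transpose]
    rw [hL, hL]
    simp only [dotProduct_add, hdot, hw, smul_dotProduct,
      sub_dotProduct, Matrix.mulVec_sub, dotProduct_sub,
      smul_eq_mul, ← ha, ← hb]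
    rw [dotProduct_comm (R *ᵥ a) a, dotProduct_comm (R *ᵥ a) b,
      hsymm b a]
    ring
  refine ⟨key, fun h x => ?_⟩
  rw [key x]
  have := hRpd.posSemidef.dotProduct_mulVec_nonneg (uj x - ujm1 x)
  have h2 : (0:ℝ) ≤ (uj x - ujm1 x) ⬝ᵥ (R *ᵥ (uj x - ujm1 x)) := by
    simpa using this
  linarith [h x]
end

section
/- Improved-policy nonnegativity: suppose V_i : R^n → R is continuously differentiable and satisfies L(V_i, u_i)(x) = 0 for all x (the policy evaluation equation), and define u_{i+1}(x) = -(1/2)R⁻¹g(x)ᵀ∇V_i(x). Then L(V_i, u_{i+1})(x) = (u_{i+1}(x) - u_i(x))ᵀR(u_{i+1}(x) - u_i(x)) ≥ 0 for all x ∈ R^n. -/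
open Matrix

/-- Improved-policy nonnegativity: if `L(V_i,u_i) ≡ 0` and
`u_{i+1} = -(1/2)R⁻¹gᵀ∇V_i`, then
`L(V_i,u_{i+1})(x) = |u_{i+1}(x) - u_i(x)|²_R ≥ 0` for all `x`. -/
theorem improved_policy_nonnegativity {n m : ℕ}
    (Vi : (Fin n → ℝ) → ℝ) (hVi : ContDiff ℝ 1 Vi)
    (f : (Fin n → ℝ) → (Fin n → ℝ))
    (g : (Fin n → ℝ) → Matrix (Fin n) (Fin m) ℝ)
    (R : Matrix (Fin m) (Fin m) ℝ)
    (hRsymm : R.IsSymm) (hRpd : R.PosDef)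
    (q : (Fin n → ℝ) → ℝ) (hq : q 0 = 0 ∧ ∀ y ≠ 0, 0 < q y)
    -- L(V,u)(x)
    (L : ((Fin n → ℝ) → (Fin m → ℝ)) → (Fin n → ℝ) → ℝ)
    (hL : ∀ u y, L u y = -(grad Vi y ⬝ᵥ (f y + (g y) *ᵥ u y)) - q y - u y ⬝ᵥ (R *ᵥ u y))
    (ui uip1 : (Fin n → ℝ) → (Fin m → ℝ))
    -- policy evaluation equation
    (heval : ∀ y, L ui y = 0)
    -- policy improvement
    (huip1 : ∀ y, uip1 y = (-(1/2) : ℝ) • (R⁻¹ *ᵥ ((g y)ᵀ *ᵥ grad Vi y))) :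
    ∀ x : Fin n → ℝ,
      L uip1 x = (uip1 x - ui x) ⬝ᵥ (R *ᵥ (uip1 x - ui x)) ∧ 0 ≤ L uip1 x := by
  intro x
  have hRinv : R * R⁻¹ = 1 :=
    mul_nonsing_inv R (isUnit_iff_ne_zero.mpr hRpd.det_pos.ne')
  have hsym : ∀ a b : Fin m → ℝ, a ⬝ᵥ (R *ᵥ b) = b ⬝ᵥ (R *ᵥ a) := by
    intro a b
    rw [Matrix.dotProduct_mulVec, ← hRsymm.eq, Matrix.vecMul_transpose,
      dotProduct_comm, hRsymm.eq]
  have hkey : (g x)ᵀ *ᵥ grad Vi x = (-2 : ℝ) • (R *ᵥ uip1 x) := by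
    rw [huip1 x, Matrix.mulVec_smul, Matrix.mulVec_mulVec, hRinv, Matrix.one_mulVec,
      smul_smul]
    norm_num
  have hform : ∀ u : Fin m → ℝ, grad Vi x ⬝ᵥ ((g x) *ᵥ u) = -2 * (uip1 x ⬝ᵥ (R *ᵥ u)) := by
    intro u
    rw [Matrix.dotProduct_mulVec, ← Matrix.mulVec_transpose, hkey,
      smul_dotProduct, dotProduct_comm (R *ᵥ uip1 x) u, hsym u (uip1 x),
      smul_eq_mul]
  set a := uip1 x with ha
  set b := ui x with hb
  have heval' := heval x
  rw [hL ui x] at heval'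
  have hLuip1 : L uip1 x = (a - b) ⬝ᵥ (R *ᵥ (a - b)) := by
    rw [hL uip1 x]
    have expand : (a - b) ⬝ᵥ (R *ᵥ (a - b)) =
        a ⬝ᵥ (R *ᵥ a) - 2 * (a ⬝ᵥ (R *ᵥ b)) + b ⬝ᵥ (R *ᵥ b) := by
      simp only [Matrix.mulVec_sub, sub_dotProduct, dotProduct_sub]
      rw [hsym b a]
      ring
    have e1 : grad Vi x ⬝ᵥ (f x + (g x) *ᵥ a) =
        grad Vi x ⬝ᵥ f x + (-2 * (a ⬝ᵥ (R *ᵥ a))) := by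
      rw [dotProduct_add, hform a]
    have e2 : grad Vi x ⬝ᵥ (f x + (g x) *ᵥ b) =
        grad Vi x ⬝ᵥ f x + (-2 * (a ⬝ᵥ (R *ᵥ b))) := by
      rw [dotProduct_add, hform b]
    rw [e2] at heval'
    rw [e1, expand]
    linarith
  refine ⟨hLuip1, ?_⟩
  rw [hLuip1]
  simpa using hRpd.posSemidef.dotProduct_mulVec_nonneg (a - b)
end

section
/- Global asymptotic stability from a feasible relaxed HJB solution: suppose V : R^n → R is continuously differentiable, positive definite, and proper (radially unbounded), satisfies V(0)=0, and H(V)(x) ≤ 0 for all x. Then the origin is a globally asymptotically stable equilibrium of ẋ = f(x) + g(x)ū(x) where ū = -(1/2)R⁻¹gᵀ∇V. -/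
open Matrix Filter

attribute [local instance] Matrix.normedAddCommGroup

/-- The origin is a globally asymptotically stable equilibrium of `ẋ = F(x)`:
Lyapunov stability together with global attractivity of the origin,
quantified over all solutions of the ODE. -/
def GloballyAsymptoticallyStable {n : ℕ} (F : (Fin n → ℝ) → (Fin n → ℝ)) : Prop :=
  (∀ ε > (0:ℝ), ∃ δ > (0:ℝ), ∀ x : ℝ → (Fin n → ℝ),
      (∀ t, HasDerivAt x (F (x t)) t) → ‖x 0‖ < δ → ∀ t ≥ (0:ℝ), ‖x t‖ < ε) ∧
  (∀ x : ℝ → (Fin n → ℝ), (∀ t, HasDerivAt x (F (x t)) t) →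
      Tendsto x atTop (nhds 0))

lemma fderiv_apply_eq_dot {n : ℕ} {V : (Fin n → ℝ) → ℝ} {y : Fin n → ℝ}
    (v : Fin n → ℝ) : fderiv ℝ V y v = grad V y ⬝ᵥ v := by
  have hv : v = ∑ i, v i • (Pi.single i 1 : Fin n → ℝ) := by
    funext j
    simp [Pi.single_apply, Finset.sum_apply]
  conv_lhs => rw [hv]
  rw [map_sum]
  simp only [_root_.map_smul, smul_eq_mul]
  rw [dotProduct]
  congr 1
  funext i
  rw [grad]
  ring


/-- Global asymptotic stability from a feasible relaxed-HJB solution: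
if `V` is `C¹`, positive definite and proper with `H(V) ≤ 0` everywhere, then the
origin is globally asymptotically stable for `ẋ = f(x) + g(x)ū(x)`,
`ū = -(1/2)R⁻¹gᵀ∇V`. -/
theorem gas_from_feasible_relaxed_HJB {n m : ℕ}
    (f : (Fin n → ℝ) → (Fin n → ℝ)) (hfLip : LocallyLipschitz f) (hf0 : f 0 = 0)
    (g : (Fin n → ℝ) → Matrix (Fin n) (Fin m) ℝ)
    (hgLip : LocallyLipschitz g)
    (R : Matrix (Fin m) (Fin m) ℝ) (hRsymm : R.IsSymm) (hRpd : R.PosDef)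
    (q : (Fin n → ℝ) → ℝ) (hqcont : Continuous q)
    (hq : q 0 = 0 ∧ ∀ y ≠ 0, 0 < q y)
    (V : (Fin n → ℝ) → ℝ) (hV : ContDiff ℝ 1 V)
    (hV0 : V 0 = 0) (hVpos : ∀ y ≠ 0, 0 < V y)
    (hVproper : Tendsto V (cocompact (Fin n → ℝ)) atTop)
    -- Hamiltonian and feasibility
    (H : (Fin n → ℝ) → ℝ)
    (hH : ∀ y, H y = grad V y ⬝ᵥ f y + q y
      - (1/4) * (grad V y ⬝ᵥ ((g y) *ᵥ (R⁻¹ *ᵥ ((g y)ᵀ *ᵥ grad V y)))))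
    (hHneg : ∀ y, H y ≤ 0)
    -- induced feedback control
    (ubar : (Fin n → ℝ) → (Fin m → ℝ))
    (hubar : ∀ y, ubar y = (-(1/2) : ℝ) • (R⁻¹ *ᵥ ((g y)ᵀ *ᵥ grad V y))) :
    GloballyAsymptoticallyStable (fun y => f y + (g y) *ᵥ ubar y) := by
  set F : (Fin n → ℝ) → (Fin n → ℝ) := fun y => f y + g y *ᵥ ubar y with hF
  have hVd : Differentiable ℝ V := hV.differentiable one_ne_zero
  have hqnn : ∀ y, 0 ≤ q y := by
    intro y
    rcases eq_or_ne y 0 with rfl | hy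
    · exact le_of_eq hq.1.symm
    · exact (hq.2 y hy).le
  have hVnn : ∀ y, 0 ≤ V y := by
    intro y
    rcases eq_or_ne y 0 with rfl | hy
    · exact le_of_eq hV0.symm
    · exact (hVpos y hy).le
  -- key dissipation inequality
  have hkey : ∀ y, grad V y ⬝ᵥ F y ≤ -q y := by
    intro y
    set S := grad V y ⬝ᵥ ((g y) *ᵥ (R⁻¹ *ᵥ ((g y)ᵀ *ᵥ grad V y))) with hSdef
    have hS : 0 ≤ S := by
      have h1 : S = ((g y)ᵀ *ᵥ grad V y) ⬝ᵥ (R⁻¹ *ᵥ ((g y)ᵀ *ᵥ grad V y)) := by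
        rw [hSdef, dotProduct_mulVec, ← Matrix.mulVec_transpose]
      rw [h1]
      have := (hRpd.inv.posSemidef).dotProduct_mulVec_nonneg ((g y)ᵀ *ᵥ grad V y)
      simpa using this
    have hHy := hHneg y
    rw [hH y] at hHy
    have hFexp : grad V y ⬝ᵥ F y = grad V y ⬝ᵥ f y + (-(1/2) : ℝ) * S := by
      simp only [hF, hubar y, dotProduct_add, Matrix.mulVec_smul, dotProduct_smul,
        smul_eq_mul]
      rfl
    rw [hFexp]
    linarith
  -- derivative of V along solutions
  have hderiv : ∀ (x : ℝ → (Fin n → ℝ)), (∀ t, HasDerivAt x (F (x t)) t) → ∀ t,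
      HasDerivAt (fun s => V (x s)) (grad V (x t) ⬝ᵥ F (x t)) t := by
    intro x hx t
    have h1 := (hVd (x t)).hasFDerivAt.comp_hasDerivAt t (hx t)
    rwa [fderiv_apply_eq_dot] at h1
  have hanti : ∀ (x : ℝ → (Fin n → ℝ)), (∀ t, HasDerivAt x (F (x t)) t) →
      Antitone (fun s => V (x s)) := by
    intro x hx
    apply antitone_of_deriv_nonpos
    · intro t; exact (hderiv x hx t).differentiableAt
    · intro t
      rw [(hderiv x hx t).deriv]
      linarith [hkey (x t), hqnn (x t)]
  -- compact sublevel sets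
  have hcomp : ∀ c : ℝ, IsCompact {y | V y ≤ c} := by
    intro c
    obtain ⟨K, hK, hsub⟩ := mem_cocompact.mp (hVproper (Ici_mem_atTop (c+1)))
    refine hK.of_isClosed_subset (isClosed_le hVd.continuous continuous_const) ?_
    intro y hy
    by_contra hyc
    have := hsub hyc
    simp only [Set.mem_preimage, Set.mem_Ici] at this
    have : V y ≤ c := hy
    linarith [hsub hyc]
  constructor
  · -- stability
    intro ε hε
    rcases Nat.eq_zero_or_pos n with hn | hn
    · subst hn
      refine ⟨1, one_pos, fun x hx h0 t ht => ?_⟩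
      have hx0 : x t = 0 := Subsingleton.elim _ _
      rw [hx0, norm_zero]
      exact hε
    · haveI : NeZero n := ⟨hn.ne'⟩
      have hne : (Metric.sphere (0 : Fin n → ℝ) ε).Nonempty :=
        NormedSpace.sphere_nonempty.mpr hε.le
      obtain ⟨y0, hy0S, hy0min⟩ := (isCompact_sphere (0 : Fin n → ℝ) ε).exists_isMinOn
        hne hVd.continuous.continuousOn
      have hy0 : y0 ≠ 0 := by
        intro h
        rw [h] at hy0S
        simp only [Metric.mem_sphere, dist_self] at hy0S
        linarith
      have hc : 0 < V y0 := hVpos y0 hy0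
      obtain ⟨δ, hδpos, hδ⟩ := Metric.continuousAt_iff.mp hVd.continuous.continuousAt (ε := V y0) hc
      refine ⟨min δ ε, lt_min hδpos hε, fun x hx h0 t ht => ?_⟩
      by_contra hcon
      push_neg at hcon
      have hxc : Continuous x := continuous_iff_continuousAt.mpr
        (fun t => (hx t).differentiableAt.continuousAt)
      have hivt := intermediate_value_Icc ht ((continuous_norm.comp hxc).continuousOn
        (s := Set.Icc 0 t))
      have hεmem : ε ∈ Set.Icc (‖x 0‖) (‖x t‖) :=
        ⟨(lt_of_lt_of_le h0 (min_le_right _ _)).le, hcon⟩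
      obtain ⟨s, hs, hsval⟩ := hivt hεmem
      have hsS : x s ∈ Metric.sphere (0 : Fin n → ℝ) ε := by
        simp only [Metric.mem_sphere, dist_zero_right]
        exact hsval
      have h1 : V y0 ≤ V (x s) := hy0min hsS
      have h2 : V (x s) ≤ V (x 0) := hanti x hx hs.1
      have h3 : V (x 0) < V y0 := by
        have := hδ (x := x 0) (by
          rw [dist_zero_right]
          exact lt_of_lt_of_le h0 (min_le_left _ _))
        rw [Real.dist_eq, hV0, sub_zero] at this
        calc V (x 0) ≤ |V (x 0)| := le_abs_self _
          _ < V y0 := this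
      linarith
  · -- attractivity
    intro x hx
    set h : ℝ → ℝ := fun s => V (x s) with hh
    have hA : Antitone h := hanti x hx
    have hbdd : BddBelow (Set.range h) := ⟨0, by rintro _ ⟨t, rfl⟩; exact hVnn _⟩
    set L := ⨅ t, h t with hL
    have hLle : ∀ t, L ≤ h t := fun t => ciInf_le hbdd t
    have htend : Tendsto h atTop (nhds L) := tendsto_atTop_ciInf hA hbdd
    have hL0 : 0 ≤ L := le_ciInf fun t => hVnn _
    have hLzero : L = 0 := by
      by_contra hLne
      have hLpos : 0 < L := lt_of_le_of_ne hL0 (Ne.symm hLne)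
      set K := {y | V y ≤ h 0} ∩ {y | L ≤ V y} with hK
      have hKcomp : IsCompact K := (hcomp (h 0)).inter_right
        (isClosed_le continuous_const hVd.continuous)
      have hKne : K.Nonempty := ⟨x 0, show V (x 0) ≤ h 0 from le_rfl, hLle 0⟩
      have h0K : (0 : Fin n → ℝ) ∉ K := by
        intro h0
        have := h0.2
        simp only [Set.mem_setOf_eq, hV0] at this
        linarith
      obtain ⟨y0, hy0K, hy0min⟩ := hKcomp.exists_isMinOn hKne hqcont.continuousOn
      have hcpos : 0 < q y0 := hq.2 y0 (by rintro rfl; exact h0K hy0K)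
      have hxK : ∀ t, 0 ≤ t → x t ∈ K := fun t ht => ⟨hA ht, hLle t⟩
      have hφ : AntitoneOn (fun t => h t + q y0 * t) (Set.Ici 0) := by
        apply antitoneOn_of_deriv_nonpos (convex_Ici 0)
        · apply Continuous.continuousOn
          exact ((hVd.continuous.comp (continuous_iff_continuousAt.mpr
            (fun t => (hx t).differentiableAt.continuousAt)))).add
            (continuous_const.mul continuous_id)
        · intro t _
          exact ((hderiv x hx t).add ((hasDerivAt_id t).const_mul (q y0))).differentiableAt.differentiableWithinAt
        · intro t htmem
          rw [interior_Ici] at htmem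
          have hd : HasDerivAt (fun s => h s + q y0 * s)
              (grad V (x t) ⬝ᵥ F (x t) + q y0 * 1) t :=
            (hderiv x hx t).add ((hasDerivAt_id t).const_mul (q y0))
          rw [hd.deriv]
          have h1 := hkey (x t)
          have h2 : q y0 ≤ q (x t) := hy0min (hxK t htmem.le)
          linarith
      set T := (h 0 - L) / q y0 + 1 with hT
      have hTpos : 0 ≤ T := by
        have h1 : 0 ≤ (h 0 - L) / q y0 := div_nonneg (by linarith [hLle 0]) hcpos.le
        rw [hT]
        linarith
      have hineq := hφ Set.self_mem_Ici (Set.mem_Ici.mpr hTpos) hTpos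
      simp only [mul_zero, add_zero] at hineq
      have hcT : q y0 * T = (h 0 - L) + q y0 := by
        rw [hT]
        field_simp
      have : h T < L := by nlinarith [hLle T]
      exact absurd (hLle T) (not_le.mpr this)
    rw [hLzero] at htend
    rw [NormedAddCommGroup.tendsto_nhds_zero]
    intro ε hε
    set D := {y | V y ≤ h 0} ∩ {y : Fin n → ℝ | ε ≤ ‖y‖} with hD
    have hDcomp : IsCompact D := (hcomp (h 0)).inter_right
      (isClosed_le continuous_const continuous_norm)
    rcases D.eq_empty_or_nonempty with hDe | hDne
    · filter_upwards [eventually_ge_atTop (0:ℝ)] with t ht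
      by_contra hcon
      push_neg at hcon
      have : x t ∈ D := ⟨hA ht, hcon⟩
      rw [hDe] at this
      exact this
    · obtain ⟨y0, hy0D, hy0min⟩ := hDcomp.exists_isMinOn hDne hVd.continuous.continuousOn
      have hy0 : y0 ≠ 0 := by
        rintro rfl
        have := hy0D.2
        simp only [Set.mem_setOf_eq, norm_zero] at this
        linarith
      have hcpos : 0 < V y0 := hVpos y0 hy0
      filter_upwards [htend (Iio_mem_nhds hcpos), eventually_ge_atTop (0:ℝ)] with t ht1 ht2
      by_contra hcon
      push_neg at hcon
      have hmem : x t ∈ D := ⟨hA ht2, hcon⟩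
      have := hy0min hmem
      simp only [Set.mem_preimage, Set.mem_Iio] at ht1
      exact absurd this (not_le.mpr ht1)
end

section
/- Cost overestimation by feasible solutions: let V be continuously differentiable, positive definite, and proper, with H(V)(x) ≤ 0 for all x, and ū = -(1/2)R⁻¹gᵀ∇V. Suppose x(·) is the solution of ẋ = f(x) + g(x)ū(x) with x(0) = x₀, and suppose x(T) → 0 as T → ∞. Then for every T > 0, V(x₀) = ∫₀^T [r(x(t), ū(x(t))) - H(V)(x(t))] dt + V(x(T)) ≥ ∫₀^T r(x(t), ū(x(t))) dt + V(x(T)), and hence V(x₀) ≥ J(x₀, ū) := ∫₀^∞ r(x(t), ū(x(t))) dt. -/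
open Matrix Filter MeasureTheory intervalIntegral

lemma clm_apply_eq_dot {n : ℕ} (L : (Fin n → ℝ) →L[ℝ] ℝ) (v : Fin n → ℝ) :
    L v = (fun i => L (Pi.single i 1)) ⬝ᵥ v := by
  have hv : v = ∑ i, v i • (Pi.single i 1 : Fin n → ℝ) := by
    ext j
    simp [Finset.sum_apply, Pi.single_apply]
  calc L v = L (∑ i, v i • (Pi.single i 1 : Fin n → ℝ)) := by rw [← hv]
    _ = ∑ i, v i • L ((Pi.single i 1 : Fin n → ℝ)) := by
        rw [map_sum]; simp [_root_.map_smul]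
    _ = (fun i => L (Pi.single i 1)) ⬝ᵥ v := by
        simp [dotProduct, mul_comm, smul_eq_mul]

/-- Cost overestimation by feasible solutions: along the closed-loop trajectory of
`ẋ = f + g ū`, `V(x₀) = ∫₀^T [r - H(V)] dt + V(x(T)) ≥ ∫₀^T r dt + V(x(T))`, and
hence `V(x₀) ≥ J(x₀,ū) = ∫₀^∞ r dt`. -/
theorem cost_overestimation_by_feasible_solution {n m : ℕ}
    (f : (Fin n → ℝ) → (Fin n → ℝ)) (hfc : Continuous f)
    (g : (Fin n → ℝ) → Matrix (Fin n) (Fin m) ℝ)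
    (hgc : ∀ i j, Continuous fun y => g y i j)
    (R : Matrix (Fin m) (Fin m) ℝ) (hRsymm : R.IsSymm) (hRpd : R.PosDef)
    (q : (Fin n → ℝ) → ℝ) (hqc : Continuous q)
    (hq : q 0 = 0 ∧ ∀ y ≠ 0, 0 < q y)
    (V : (Fin n → ℝ) → ℝ) (hV : ContDiff ℝ 1 V)
    (hV0 : V 0 = 0) (hVpos : ∀ y ≠ 0, 0 < V y)
    (hVproper : Tendsto V (cocompact (Fin n → ℝ)) atTop)
    -- Hamiltonian and feasibility
    (H : (Fin n → ℝ) → ℝ)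
    (hH : ∀ y, H y = grad V y ⬝ᵥ f y + q y
      - (1/4) * (grad V y ⬝ᵥ ((g y) *ᵥ (R⁻¹ *ᵥ ((g y)ᵀ *ᵥ grad V y)))))
    (hHneg : ∀ y, H y ≤ 0)
    -- induced feedback control and running cost
    (ubar : (Fin n → ℝ) → (Fin m → ℝ))
    (hubar : ∀ y, ubar y = (-(1/2) : ℝ) • (R⁻¹ *ᵥ ((g y)ᵀ *ᵥ grad V y)))
    (r : (Fin n → ℝ) → (Fin m → ℝ) → ℝ)
    (hr : ∀ y u, r y u = q y + u ⬝ᵥ (R *ᵥ u))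
    -- closed-loop trajectory from x₀ converging to the origin
    (x₀ : Fin n → ℝ) (x : ℝ → (Fin n → ℝ))
    (hsol : ∀ t, HasDerivAt x (f (x t) + (g (x t)) *ᵥ ubar (x t)) t)
    (hx0 : x 0 = x₀)
    (hlim : Tendsto x atTop (nhds 0)) :
    (∀ T > (0:ℝ),
      V x₀ = (∫ t in (0:ℝ)..T, (r (x t) (ubar (x t)) - H (x t))) + V (x T) ∧
      (∫ t in (0:ℝ)..T, r (x t) (ubar (x t))) + V (x T) ≤ V x₀) ∧
    (∫ t in Set.Ioi (0:ℝ), r (x t) (ubar (x t))) ≤ V x₀ := by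
  have hRdet : IsUnit R.det := hRpd.det_pos.ne'.isUnit
  have hRRinv : R * R⁻¹ = 1 := Matrix.mul_nonsing_inv R hRdet
  -- nonnegativity facts
  have hq0 : ∀ y, 0 ≤ q y := by
    intro y; by_cases hy : y = 0
    · simp [hy, hq.1]
    · exact (hq.2 y hy).le
  have hV0' : ∀ y, 0 ≤ V y := by
    intro y; by_cases hy : y = 0
    · simp [hy, hV0]
    · exact (hVpos y hy).le
  have hrnn : ∀ y, 0 ≤ r y (ubar y) := by
    intro y
    rw [hr]
    refine add_nonneg (hq0 y) ?_
    have := hRpd.posSemidef.dotProduct_mulVec_nonneg (ubar y)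
    simpa using this
  -- key algebraic identity: r - H = -(∇V ⬝ (f + g ū))
  have halg : ∀ y, r y (ubar y) - H y
      = -(grad V y ⬝ᵥ (f y + g y *ᵥ ubar y)) := by
    intro y
    set a := grad V y with ha
    set w := (g y)ᵀ *ᵥ a with hw
    set s := R⁻¹ *ᵥ w with hs
    have hRs : R *ᵥ s = w := by
      rw [hs, Matrix.mulVec_mulVec, hRRinv, Matrix.one_mulVec]
    have hgs : a ⬝ᵥ (g y *ᵥ s) = s ⬝ᵥ w := by
      rw [Matrix.dotProduct_mulVec, ← Matrix.mulVec_transpose, ← hw,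
        dotProduct_comm]
    have hub : ubar y = (-(1/2) : ℝ) • s := by rw [hubar]
    have hrw : r y (ubar y) = q y + (1/4) * (s ⬝ᵥ w) := by
      rw [hr, hub, Matrix.mulVec_smul, hRs, smul_dotProduct,
        dotProduct_smul, smul_eq_mul, smul_eq_mul]
      ring
    have hHw : H y = a ⬝ᵥ f y + q y - (1/4) * (s ⬝ᵥ w) := by
      rw [hH, ← ha, ← hw, ← hs, hgs]
    have hdw : a ⬝ᵥ (f y + g y *ᵥ ubar y) = a ⬝ᵥ f y - (1/2) * (s ⬝ᵥ w) := by
      rw [dotProduct_add, hub, Matrix.mulVec_smul, dotProduct_smul,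
        hgs, smul_eq_mul]
      ring
    rw [hrw, hHw, hdw]; ring
  -- derivative of V along the trajectory
  have hdV : ∀ t, HasDerivAt (fun s => V (x s))
      (-(r (x t) (ubar (x t)) - H (x t))) t := by
    intro t
    have h1 : HasFDerivAt V (fderiv ℝ V (x t)) (x t) :=
      (hV.differentiable one_ne_zero (x t)).hasFDerivAt
    have h2 := h1.comp_hasDerivAt t (hsol t)
    have h3 : fderiv ℝ V (x t) (f (x t) + g (x t) *ᵥ ubar (x t))
        = grad V (x t) ⬝ᵥ (f (x t) + g (x t) *ᵥ ubar (x t)) :=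
      clm_apply_eq_dot _ _
    rw [halg (x t)]
    simpa [h3, Function.comp_def] using h2
  -- continuity facts
  have hxc : Continuous x :=
    continuous_iff_continuousAt.2 fun t => (hsol t).continuousAt
  have hgradc : Continuous (grad V) :=
    continuous_pi fun i =>
      ((ContinuousLinearMap.apply ℝ ℝ (Pi.single i 1)).continuous).comp
        (hV.continuous_fderiv one_ne_zero)
  have hgm : Continuous g := continuous_matrix hgc
  have hubarc : Continuous ubar := by
    have : ubar = fun y => (-(1/2) : ℝ) • (R⁻¹ *ᵥ ((g y)ᵀ *ᵥ grad V y)) :=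
      funext hubar
    rw [this]
    exact Continuous.const_smul ((continuous_const (y := R⁻¹)).matrix_mulVec
      ((hgm.matrix_transpose).matrix_mulVec hgradc)) (-(1/2) : ℝ)
  have hHcont : Continuous H := by
    have : H = fun y => grad V y ⬝ᵥ f y + q y
        - (1/4) * (grad V y ⬝ᵥ ((g y) *ᵥ (R⁻¹ *ᵥ ((g y)ᵀ *ᵥ grad V y)))) :=
      funext hH
    rw [this]
    exact ((hgradc.dotProduct hfc).add hqc).sub
      (continuous_const.mul (hgradc.dotProduct (hgm.matrix_mulVec
        (continuous_const.matrix_mulVec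
          ((hgm.matrix_transpose).matrix_mulVec hgradc)))))
  have hrc : Continuous fun t => r (x t) (ubar (x t)) := by
    have : (fun t => r (x t) (ubar (x t)))
        = fun t => q (x t) + ubar (x t) ⬝ᵥ (R *ᵥ ubar (x t)) := by
      funext t; rw [hr]
    rw [this]
    exact (hqc.comp hxc).add ((hubarc.comp hxc).dotProduct
      (continuous_const.matrix_mulVec (hubarc.comp hxc)))
  have hHxc : Continuous fun t => H (x t) := hHcont.comp hxc
  -- the main per-T statement
  have hmain : ∀ T > (0:ℝ),
      V x₀ = (∫ t in (0:ℝ)..T, (r (x t) (ubar (x t)) - H (x t))) + V (x T) ∧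
      (∫ t in (0:ℝ)..T, r (x t) (ubar (x t))) + V (x T) ≤ V x₀ := by
    intro T hT
    have hInt : IntervalIntegrable
        (fun t => -(r (x t) (ubar (x t)) - H (x t))) volume 0 T :=
      ((hrc.sub hHxc).neg).intervalIntegrable 0 T
    have hftc := intervalIntegral.integral_eq_sub_of_hasDerivAt
      (f := fun s => V (x s)) (fun t _ => hdV t) hInt
    have heq : (∫ t in (0:ℝ)..T, (r (x t) (ubar (x t)) - H (x t)))
        = V x₀ - V (x T) := by
      have := hftc
      rw [intervalIntegral.integral_neg] at this
      have h2 : -(∫ t in (0:ℝ)..T, (r (x t) (ubar (x t)) - H (x t)))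
          = V (x T) - V x₀ := by simpa [hx0] using this
      linarith
    constructor
    · rw [heq]; ring
    · have hmono : (∫ t in (0:ℝ)..T, r (x t) (ubar (x t)))
          ≤ ∫ t in (0:ℝ)..T, (r (x t) (ubar (x t)) - H (x t)) := by
        apply intervalIntegral.integral_mono_on hT.le
          (hrc.intervalIntegrable 0 T) ((hrc.sub hHxc).intervalIntegrable 0 T)
        intro t ht
        have := hHneg (x t)
        simp only [Pi.sub_apply]
        linarith
      linarith [heq, hmono]
  refine ⟨hmain, ?_⟩
  have hVx₀ : 0 ≤ V x₀ := hV0' x₀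
  have hbound : ∀ T > (0:ℝ), (∫ t in (0:ℝ)..T, r (x t) (ubar (x t))) ≤ V x₀ := by
    intro T hT
    have := (hmain T hT).2
    have := hV0' (x T)
    linarith
  by_cases hint : IntegrableOn (fun t => r (x t) (ubar (x t))) (Set.Ioi 0) volume
  · have htend := intervalIntegral_tendsto_integral_Ioi 0 hint tendsto_id
    exact le_of_tendsto htend
      (eventually_atTop.2 ⟨1, fun T hT => hbound T (by linarith)⟩)
  · rw [MeasureTheory.integral_undef hint]
    exact hVx₀
end

section
/- Monotone decrease in policy iteration: let u_i be a globally stabilizing control policy and V_i ∈ C¹ with V_i(0)=0 satisfy L(V_i, u_i)(x) = 0 for all x. Suppose V_{i-1} ∈ P satisfies L(V_{i-1}, u_i)(x) ≥ 0 for all x. Then V_i(x) ≤ V_{i-1}(x) for all x ∈ R^n. (Proof: (∇V_{i-1} - ∇V_i)ᵀ(f + g u_i) + q_i = 0 with q_i := L(V_{i-1},u_i) ≥ 0; integrating along the closed-loop trajectory from any x₀, using convergence of the state to the origin and V_{i-1}(0)=V_i(0)=0, gives V_{i-1}(x₀) - V_i(x₀) = ∫₀^∞ q_i(x(t)) dt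 ≥ 0.) -/
open Matrix Filter MeasureTheory

lemma grad_dot {n : ℕ} (V : (Fin n → ℝ) → ℝ) (y v : Fin n → ℝ)
    (hV : DifferentiableAt ℝ V y) :
    grad V y ⬝ᵥ v = fderiv ℝ V y v := by
  have hv : v = ∑ i, v i • (Pi.single i (1:ℝ) : Fin n → ℝ) := by
    ext j
    simp [Finset.sum_apply, Pi.single_apply]
  conv_rhs => rw [hv]
  rw [map_sum]
  simp only [_root_.map_smul, smul_eq_mul]
  unfold grad dotProduct
  simp [mul_comm]

/-- Monotone decrease in policy iteration: if `u_i` is globally stabilizing,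
`L(V_i,u_i) ≡ 0` with `V_i(0) = 0`, and `V_{i-1} ∈ P` satisfies
`L(V_{i-1},u_i) ≥ 0` pointwise, then `V_i ≤ V_{i-1}` on `ℝⁿ`. -/
theorem policy_iteration_monotone_decrease {n m : ℕ}
    (f : (Fin n → ℝ) → (Fin n → ℝ)) (hfc : Continuous f)
    (g : (Fin n → ℝ) → Matrix (Fin n) (Fin m) ℝ)
    (hgc : ∀ i j, Continuous fun y => g y i j)
    (R : Matrix (Fin m) (Fin m) ℝ) (hRsymm : R.IsSymm) (hRpd : R.PosDef)
    (q : (Fin n → ℝ) → ℝ) (hqc : Continuous q)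
    (hq : q 0 = 0 ∧ ∀ y ≠ 0, 0 < q y)
    -- L(V,u)(x)
    (L : ((Fin n → ℝ) → ℝ) → ((Fin n → ℝ) → (Fin m → ℝ)) → (Fin n → ℝ) → ℝ)
    (hL : ∀ V u y, L V u y
      = -(grad V y ⬝ᵥ (f y + (g y) *ᵥ u y)) - q y - u y ⬝ᵥ (R *ᵥ u y))
    -- the policy u_i, globally stabilizing
    (ui : (Fin n → ℝ) → (Fin m → ℝ))
    (hGAS : GloballyAsymptoticallyStable (fun y => f y + (g y) *ᵥ ui y))
    -- closed-loop trajectories exist from every initial condition and converge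
    (hexist : ∀ x₀ : Fin n → ℝ, ∃ x : ℝ → (Fin n → ℝ),
      (∀ t, HasDerivAt x (f (x t) + (g (x t)) *ᵥ ui (x t)) t) ∧
      x 0 = x₀ ∧ Tendsto x atTop (nhds 0))
    -- V_i solves the policy evaluation equation
    (Vi : (Fin n → ℝ) → ℝ) (hVi : ContDiff ℝ 1 Vi) (hVi0 : Vi 0 = 0)
    (heval : ∀ y, L Vi ui y = 0)
    -- V_{i-1} ∈ P with L(V_{i-1},u_i) ≥ 0
    (Vim1 : (Fin n → ℝ) → ℝ) (hVim1 : ContDiff ℝ 1 Vim1)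
    (hVim10 : Vim1 0 = 0) (hVim1pos : ∀ y ≠ 0, 0 < Vim1 y)
    (hVim1proper : Tendsto Vim1 (cocompact (Fin n → ℝ)) atTop)
    (hfeas : ∀ y, 0 ≤ L Vim1 ui y) :
    ∀ y : Fin n → ℝ, Vi y ≤ Vim1 y := by

  intro y
  obtain ⟨x, hx, hx0, hxlim⟩ := hexist y
  set F : (Fin n → ℝ) → (Fin n → ℝ) := fun z => f z + (g z) *ᵥ ui z with hF
  set W : (Fin n → ℝ) → ℝ := fun z => Vim1 z - Vi z with hWdef
  have hWdiff : Differentiable ℝ W := (hVim1.differentiable one_ne_zero).sub (hVi.differentiable one_ne_zero)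
  -- derivative of W along trajectory is nonpositive
  have hkey : ∀ z, grad W z ⬝ᵥ F z ≤ 0 := by
    intro z
    have h1 := hL Vim1 ui z
    have h2 := hL Vi ui z
    have h3 := heval z
    have h4 := hfeas z
    have hgW : grad W z ⬝ᵥ F z = grad Vim1 z ⬝ᵥ F z - grad Vi z ⬝ᵥ F z := by
      rw [grad_dot _ _ _ (hWdiff z), grad_dot _ _ _ (hVim1.differentiable one_ne_zero z),
        grad_dot _ _ _ (hVi.differentiable one_ne_zero z)]
      have : fderiv ℝ W z = fderiv ℝ Vim1 z - fderiv ℝ Vi z := by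
        exact fderiv_sub (hVim1.differentiable one_ne_zero z) (hVi.differentiable one_ne_zero z)
      rw [this]; simp
    rw [hgW]
    rw [h2] at h3
    rw [h1] at h4
    nlinarith [h3, h4]
  have hWx : ∀ t, HasDerivAt (fun t => W (x t)) (grad W (x t) ⬝ᵥ F (x t)) t := by
    intro t
    have hf : HasFDerivAt W (fderiv ℝ W (x t)) (x t) := (hWdiff (x t)).hasFDerivAt
    have := hf.comp_hasDerivAt t (hx t)
    rwa [grad_dot _ _ _ (hWdiff (x t))]
  -- W ∘ x is antitone
  have hanti : Antitone (fun t => W (x t)) := by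
    apply antitone_of_deriv_nonpos
    · exact fun t => (hWx t).differentiableAt
    · intro t
      rw [(hWx t).deriv]
      exact hkey (x t)
  -- W ∘ x tends to W 0 = 0
  have hW0 : W 0 = 0 := by simp [hWdef, hVim10, hVi0]
  have hWcont : Continuous W := hWdiff.continuous
  have hlim : Tendsto (fun t => W (x t)) atTop (nhds 0) := by
    rw [← hW0]
    exact (hWcont.tendsto 0).comp hxlim
  have hge : (0:ℝ) ≤ W (x 0) := by
    apply le_of_tendsto hlim
    filter_upwards [eventually_ge_atTop (0:ℝ)] with t ht
    exact hanti ht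
  rw [hx0] at hge
  simpa [hWdef] using hge
end
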